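/- If H is a polynomial of degree ν with ν ≤ 2k/s, then the PHBVM(k,s) method conserves the Hamiltonian exactly: for the polynomial u ∈ Π_s satisfying u̇(ch) = ∑_{i,j=0}^{s-1} P_i(c) ρ̂_{ij}(u) γ̂_j(u), u(0) = y_0, one has H(u(h)) = H(u(0)), where ρ̂_{ij}(u), γ̂_j(u) are defined by Gauss–Legendre quadrature of order 2k. -/

import Mathlib

open Matrix Polynomial

private lemma totalDegree_pderiv_le {m : ℕ} (i : Fin m) (p : MvPolynomial (Fin m) ℝ) :
    (MvPolynomial.pderiv i p).totalDegree ≤ p.totalDegree - 1 := by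
  classical
  conv_lhs => rw [p.as_sum]
  rw [map_sum]
  refine le_trans (MvPolynomial.totalDegree_finset_sum _ _) (Finset.sup_le ?_)
  intro v hv
  rw [MvPolynomial.pderiv_monomial]
  by_cases hvi : v i = 0
  · simp [hvi]
  · refine le_trans (MvPolynomial.totalDegree_monomial_le _ _) ?_
    have hle : Finsupp.single i 1 ≤ v := by
      rw [Finsupp.single_le_iff]; omega
    have hadd : (v - Finsupp.single i 1) + Finsupp.single i 1 = v :=
      tsub_add_cancel_of_le hle
    have hsum : ((v - Finsupp.single i 1).sum fun _ n => n) + 1 = v.sum fun _ n => n := by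
      conv_rhs => rw [← hadd]
      rw [Finsupp.sum_add_index' (fun _ => rfl) (fun _ _ _ => rfl)]
      simp
    have hv' : (v.sum fun _ n => n) ≤ p.totalDegree := by
      rw [MvPolynomial.totalDegree]
      exact Finset.le_sup (f := fun w => w.sum fun _ e => e) hv
    simp only [Function.id_def]
    omega

private lemma derivative_aeval' {m : ℕ} (f : Fin m → Polynomial ℝ) (p : MvPolynomial (Fin m) ℝ) :
    Polynomial.derivative (MvPolynomial.aeval f p)
      = ∑ r : Fin m, MvPolynomial.aeval f (MvPolynomial.pderiv r p)
          * Polynomial.derivative (f r) := by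
  induction p using MvPolynomial.induction_on with
  | C a => simp
  | add p q hp hq => simp [hp, hq, add_mul, Finset.sum_add_distrib]
  | mul_X p n hp =>
      rw [_root_.map_mul, MvPolynomial.aeval_X, Polynomial.derivative_mul, hp]
      have hr : ∀ r : Fin m,
          MvPolynomial.aeval f (MvPolynomial.pderiv r (p * MvPolynomial.X n))
            = MvPolynomial.aeval f (MvPolynomial.pderiv r p) * f n
              + MvPolynomial.aeval f p * (if n = r then 1 else 0) := by
        intro r
        rw [MvPolynomial.pderiv_mul, map_add, _root_.map_mul, _root_.map_mul, MvPolynomial.aeval_X]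
        congr 1
        by_cases hnr : n = r
        · subst hnr; simp
        · simp [MvPolynomial.pderiv_X_of_ne hnr, if_neg hnr]
      simp only [hr, add_mul, Finset.sum_add_distrib, Finset.sum_mul]
      refine congrArg₂ (· + ·) ?_ ?_
      · exact Finset.sum_congr rfl fun r _ => by ring
      · simp [mul_ite, ite_mul, Finset.sum_ite_eq]

private lemma eval_aeval' {m : ℕ} (f : Fin m → Polynomial ℝ) (p : MvPolynomial (Fin m) ℝ)
    (x : ℝ) :
    (MvPolynomial.aeval f p).eval x = MvPolynomial.eval (fun r => (f r).eval x) p := by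
  induction p using MvPolynomial.induction_on with
  | C a => simp
  | add p q hp hq => simp [hp, hq]
  | mul_X p n hp => simp [hp]

private lemma skew_dot {m : ℕ} (M : Matrix (Fin m) (Fin m) ℝ) (hM : Mᵀ = -M)
    (x y : Fin m → ℝ) : x ⬝ᵥ M *ᵥ y = -(y ⬝ᵥ M *ᵥ x) := by
  have hM' : M = -Mᵀ := by rw [hM, neg_neg]
  rw [dotProduct_mulVec]
  conv_lhs => rw [hM']
  rw [Matrix.vecMul_neg, Matrix.vecMul_transpose, neg_dotProduct, dotProduct_comm]
/-- Exact energy conservation of PHBVM(k,s) for polynomial Hamiltonians of degree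
`ν ≤ 2k/s`: `H(u(h)) = H(u(0))`. -/
theorem stmt_13 (m s k : ℕ) (hs : 0 < s) (h : ℝ) (hh : 0 < h)
    (ν : ℕ) (hν : (ν : ℝ) ≤ 2 * k / s)
    (P : ℕ → Polynomial ℝ)
    (hdeg : ∀ n, (P n).natDegree = n)
    (B : (Fin m → ℝ) → Matrix (Fin m) (Fin m) ℝ)
    (hB : ∀ y, (B y)ᵀ = -(B y))
    (Hp : MvPolynomial (Fin m) ℝ)
    (hHdeg : Hp.totalDegree ≤ ν)
    (u : Fin m → Polynomial ℝ)
    (hu : ∀ r, (u r).natDegree ≤ s)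
    (c w : Fin k → ℝ)
    (hquad : ∀ q : Polynomial ℝ, q.natDegree ≤ 2 * k - 1 →
      ∑ ℓ : Fin k, w ℓ * q.eval (c ℓ) = ∫ x in (0:ℝ)..1, q.eval x)
    (γ : ℕ → (Fin m → ℝ))
    (hγ : ∀ j, γ j = ∑ ℓ : Fin k, (w ℓ * (P j).eval (c ℓ)) •
      (fun r => MvPolynomial.eval (fun r' => (u r').eval (c ℓ * h))
        (MvPolynomial.pderiv r Hp)))
    (ρ : ℕ → ℕ → Matrix (Fin m) (Fin m) ℝ)
    (hρ : ∀ i j, ρ i j = ∑ ℓ : Fin k,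
      (w ℓ * ((P i).eval (c ℓ) * (P j).eval (c ℓ))) •
        B (fun r => (u r).eval (c ℓ * h)))
    (hode : ∀ c' ∈ Set.Icc (0:ℝ) 1,
      (fun r => (Polynomial.derivative (u r)).eval (c' * h)) =
      ∑ i ∈ Finset.range s, ∑ j ∈ Finset.range s,
        (P i).eval c' • (ρ i j).mulVec (γ j)) :
    MvPolynomial.eval (fun r => (u r).eval h) Hp
      = MvPolynomial.eval (fun r => (u r).eval 0) Hp := by
  classical
  by_cases hν0 : ν = 0
  · subst hν0
    have h0 : Hp.totalDegree = 0 := le_antisymm hHdeg (Nat.zero_le _)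
    rw [MvPolynomial.totalDegree_eq_zero_iff] at h0
    rw [MvPolynomial.eval_eq, MvPolynomial.eval_eq]
    refine Finset.sum_congr rfl fun d hd => ?_
    have hsup : d.support = ∅ := by
      ext x; simp [Finsupp.mem_support_iff, h0 d hd x]
    simp [hsup]
  have hν1 : 1 ≤ ν := Nat.one_le_iff_ne_zero.mpr hν0
  have hνs : ν * s ≤ 2 * k := by
    have hs' : (0:ℝ) < s := by exact_mod_cast hs
    have h2 : (ν:ℝ) * s ≤ 2 * k := (le_div_iff₀ hs').mp hν
    exact_mod_cast h2
  set f : Fin m → Polynomial ℝ := fun r => (u r).comp (Polynomial.C h * Polynomial.X) with hf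
  set q : Polynomial ℝ := MvPolynomial.aeval f Hp with hq
  set g : Fin m → Polynomial ℝ :=
    fun r => MvPolynomial.aeval f (MvPolynomial.pderiv r Hp) with hg
  have hfe : ∀ r x, (f r).eval x = (u r).eval (x * h) := by
    intro r x
    simp only [hf]
    rw [Polynomial.eval_comp]
    simp only [Polynomial.eval_mul, Polynomial.eval_C, Polynomial.eval_X]
    rw [mul_comm]
  have hq1 : q.eval 1 = MvPolynomial.eval (fun r => (u r).eval h) Hp := by
    rw [hq, eval_aeval']
    have : (fun r => (f r).eval 1) = fun r => (u r).eval h := by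
      funext r; rw [hfe]; norm_num
    rw [this]
  have hq0 : q.eval 0 = MvPolynomial.eval (fun r => (u r).eval 0) Hp := by
    rw [hq, eval_aeval']
    have : (fun r => (f r).eval 0) = fun r => (u r).eval 0 := by
      funext r; rw [hfe]; norm_num
    rw [this]
  have hftc : ∫ x in (0:ℝ)..1, (Polynomial.derivative q).eval x = q.eval 1 - q.eval 0 := by
    refine intervalIntegral.integral_eq_sub_of_hasDerivAt (fun x _ => q.hasDerivAt x) ?_
    exact (Polynomial.continuous _).intervalIntegrable _ _
  have hdegg : ∀ r : Fin m, (g r).natDegree ≤ (ν - 1) * s := by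
    intro r
    apply MvPolynomial.aeval_natDegree_le
    · exact le_trans (totalDegree_pderiv_le r Hp) (Nat.sub_le_sub_right hHdeg 1)
    · intro r'
      calc (f r').natDegree
          ≤ (u r').natDegree * (Polynomial.C h * Polynomial.X).natDegree :=
            Polynomial.natDegree_comp_le
        _ ≤ s * 1 := Nat.mul_le_mul (hu r')
            (le_trans (Polynomial.natDegree_C_mul_le _ _) (le_of_eq Polynomial.natDegree_X))
        _ = s := mul_one s
  have hquad' : ∀ i, i < s → ∀ r : Fin m,
      (∫ x in (0:ℝ)..1, (P i).eval x * (g r).eval x)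
        = ∑ ℓ : Fin k, w ℓ * ((P i).eval (c ℓ) * (g r).eval (c ℓ)) := by
    intro i hi r
    have h1 : s ≤ ν * s := Nat.le_mul_of_pos_left s hν1
    have h2 : (ν - 1) * s = ν * s - s := by rw [Nat.sub_mul, one_mul]
    have hd : (P i * g r).natDegree ≤ 2 * k - 1 := by
      refine le_trans Polynomial.natDegree_mul_le ?_
      rw [hdeg i]
      have := hdegg r
      omega
    have := hquad (P i * g r) hd
    simp only [Polynomial.eval_mul] at this
    rw [← this]
  have hγval : ∀ (i : ℕ) (r : Fin m),
      (∑ ℓ : Fin k, w ℓ * ((P i).eval (c ℓ) * (g r).eval (c ℓ))) = γ i r := by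
    intro i r
    rw [hγ]
    simp only [Finset.sum_apply, Pi.smul_apply, smul_eq_mul]
    refine Finset.sum_congr rfl fun ℓ _ => ?_
    have : (g r).eval (c ℓ)
        = MvPolynomial.eval (fun r' => (u r').eval (c ℓ * h)) (MvPolynomial.pderiv r Hp) := by
      rw [hg, eval_aeval']
      have : (fun r' => (f r').eval (c ℓ)) = fun r' => (u r').eval (c ℓ * h) := by
        funext r'; exact hfe r' (c ℓ)
      rw [this]
    rw [this]; ring
  -- pointwise identity of the integrand
  have hEq : Set.EqOn (fun x => (Polynomial.derivative q).eval x)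
      (fun x => h * ∑ i ∈ Finset.range s, ∑ j ∈ Finset.range s, ∑ r : Fin m,
        (P i).eval x * (g r).eval x * ((ρ i j).mulVec (γ j)) r)
      (Set.uIcc (0:ℝ) 1) := by
    intro x hx
    have hx' : x ∈ Set.Icc (0:ℝ) 1 := by
      rwa [Set.uIcc_of_le (by norm_num : (0:ℝ) ≤ 1)] at hx
    have hode' := congrFun (hode x hx')
    simp only
    rw [hq, derivative_aeval' f Hp]
    rw [Polynomial.eval_finset_sum]
    have hder : ∀ r, (Polynomial.derivative (f r)).eval x
        = h * (Polynomial.derivative (u r)).eval (x * h) := by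
      intro r
      simp only [hf]
      rw [Polynomial.derivative_comp]
      simp only [Polynomial.derivative_mul, Polynomial.derivative_C, Polynomial.derivative_X,
        zero_mul, mul_one, zero_add, Polynomial.eval_mul, Polynomial.eval_C,
        Polynomial.eval_comp, Polynomial.eval_X]
      rw [mul_comm h x]
    have hterm : ∀ r : Fin m, (MvPolynomial.aeval f (MvPolynomial.pderiv r Hp)
          * Polynomial.derivative (f r)).eval x
        = (g r).eval x * (h * ∑ i ∈ Finset.range s, ∑ j ∈ Finset.range s,
            (P i).eval x * ((ρ i j).mulVec (γ j)) r) := by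
      intro r
      rw [Polynomial.eval_mul, hder r, hode' r]
      simp only [Finset.sum_apply, Pi.smul_apply, smul_eq_mul, hg]
    simp only [hterm]
    simp only [Finset.mul_sum, Finset.sum_mul]
    rw [Finset.sum_comm]
    refine Finset.sum_congr rfl fun i _ => ?_
    rw [Finset.sum_comm]
    refine Finset.sum_congr rfl fun j _ => Finset.sum_congr rfl fun r _ => by ring
  have hc1 : ∀ (i : ℕ) (r : Fin m) (a : ℝ),
      Continuous (fun x => (P i).eval x * (g r).eval x * a) :=
    fun i r a => ((Polynomial.continuous _).mul (Polynomial.continuous _)).mul continuous_const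
  have hc2 : ∀ (i j : ℕ), Continuous (fun x => ∑ r : Fin m,
      (P i).eval x * (g r).eval x * ((ρ i j).mulVec (γ j)) r) :=
    fun i j => continuous_finset_sum _ fun r _ => hc1 i r _
  have hc3 : ∀ (i : ℕ), Continuous (fun x => ∑ j ∈ Finset.range s, ∑ r : Fin m,
      (P i).eval x * (g r).eval x * ((ρ i j).mulVec (γ j)) r) :=
    fun i => continuous_finset_sum _ fun j _ => hc2 i j
  have key : (∫ x in (0:ℝ)..1, (Polynomial.derivative q).eval x)
      = h * ∑ i ∈ Finset.range s, ∑ j ∈ Finset.range s, γ i ⬝ᵥ (ρ i j) *ᵥ (γ j) := by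
    rw [intervalIntegral.integral_congr hEq, intervalIntegral.integral_const_mul]
    congr 1
    rw [intervalIntegral.integral_finset_sum (fun i (_ : i ∈ Finset.range s) =>
      (hc3 i).intervalIntegrable 0 1)]
    refine Finset.sum_congr rfl fun i hi => ?_
    rw [intervalIntegral.integral_finset_sum (fun j (_ : j ∈ Finset.range s) =>
      (hc2 i j).intervalIntegrable 0 1)]
    refine Finset.sum_congr rfl fun j hj => ?_
    rw [intervalIntegral.integral_finset_sum (fun r (_ : r ∈ Finset.univ) =>
      (hc1 i r _).intervalIntegrable 0 1)]
    have hi' : i < s := Finset.mem_range.mp hi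
    rw [dotProduct]
    refine Finset.sum_congr rfl fun r _ => ?_
    rw [intervalIntegral.integral_mul_const, hquad' i hi' r, hγval i r]
  have hskew : ∀ i j, (ρ i j)ᵀ = -(ρ i j) := by
    intro i j
    rw [hρ, Matrix.transpose_sum]
    rw [← Finset.sum_neg_distrib]
    refine Finset.sum_congr rfl fun ℓ _ => ?_
    rw [Matrix.transpose_smul, hB, smul_neg]
  have hsymm : ∀ i j, ρ i j = ρ j i := by
    intro i j
    rw [hρ, hρ]
    refine Finset.sum_congr rfl fun ℓ _ => ?_
    rw [mul_comm ((P i).eval (c ℓ))]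
  have hS : (∑ i ∈ Finset.range s, ∑ j ∈ Finset.range s, γ i ⬝ᵥ (ρ i j) *ᵥ (γ j)) = 0 := by
    set S := ∑ i ∈ Finset.range s, ∑ j ∈ Finset.range s, γ i ⬝ᵥ (ρ i j) *ᵥ (γ j) with hSdef
    have h1 : S = -S := by
      calc S = ∑ i ∈ Finset.range s, ∑ j ∈ Finset.range s, -(γ j ⬝ᵥ (ρ i j) *ᵥ (γ i)) :=
            Finset.sum_congr rfl fun i _ => Finset.sum_congr rfl fun j _ =>
              skew_dot _ (hskew i j) _ _
        _ = -∑ i ∈ Finset.range s, ∑ j ∈ Finset.range s, γ j ⬝ᵥ (ρ i j) *ᵥ (γ i) := by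
            simp [Finset.sum_neg_distrib]
        _ = -∑ j ∈ Finset.range s, ∑ i ∈ Finset.range s, γ j ⬝ᵥ (ρ i j) *ᵥ (γ i) := by
            rw [Finset.sum_comm]
        _ = -S := by
            rw [hSdef]
            congr 1
            exact Finset.sum_congr rfl fun j _ => Finset.sum_congr rfl fun i _ => by
              rw [hsymm i j]
    linarith
  have hfinal : MvPolynomial.eval (fun r => (u r).eval h) Hp
      - MvPolynomial.eval (fun r => (u r).eval 0) Hp = 0 := by
    rw [← hq1, ← hq0, ← hftc, key, hS, mul_zero]
  linarith
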